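/- arXiv:1608.08348 — 2 statements merged into one kernel-verified Lean document; each statement's English description precedes it below -/
import Mathlib

section
/- Suppose the trapping ball assumption holds, ‖A‖ > 0, ‖u‖ < R, and there is j ∈ ℕ such that: (i) the only v ∈ B_R satisfying H(D^i v) = H(D^i u) for every 0 ≤ i ≤ j is v = u; and (ii) the gradients at u of the real-valued polynomial functions v ↦ (H(D^i v))_m, for 0 ≤ i ≤ j and 1 ≤ m ≤ d_o, span ℝ^d. Then there exists h₀ > 0 such that for every h ∈ (0, h₀] and every integer k ≥ j there is a constant c > 0 (depending on u, k, h) with max_{0≤i≤k} ‖H Ψ_{ih}(u) − H Ψ_{ih}(v)‖ ≥ c·‖v − u‖ for every v ∈ B_R. -/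
open Set

noncomputable section

/-- The formal time derivatives `D^i v` of a solution of
`dv/dt = -A v - B(v,v) + f` at time `0`. -/
def formalDeriv {E : Type*} [AddCommGroup E] [Module ℝ E]
    (A : E → E) (B : E → E → E) (f : E) : ℕ → E → E
  | 0, v => v
  | 1, v => f - A v - B v v
  | (i + 2), v =>
      -(A (formalDeriv A B f (i + 1) v)) -
        ∑ j ∈ (Finset.range (i + 2)).attach,
          ((i + 1).choose j.1 : ℝ) •
            B (formalDeriv A B f j.1 v) (formalDeriv A B f (i + 1 - j.1) v)
  termination_by i _ => i
  decreasing_by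
  · omega
  · have := Finset.mem_range.mp j.2; omega
  · have := Finset.mem_range.mp j.2; omega

variable {E : Type*} [NormedAddCommGroup E] [NormedSpace ℝ E]

lemma formalDeriv_zero (A : E → E) (B : E → E → E) (f : E) (v : E) :
    formalDeriv A B f 0 v = v := by simp [formalDeriv]

lemma formalDeriv_one (A : E → E) (B : E → E → E) (f : E) (v : E) :
    formalDeriv A B f 1 v = f - A v - B v v := by simp [formalDeriv]

lemma formalDeriv_succ_succ (A : E → E) (B : E → E → E) (f : E) (i : ℕ) (v : E) :
    formalDeriv A B f (i + 2) v =
      -(A (formalDeriv A B f (i + 1) v)) -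
        ∑ m ∈ Finset.range (i + 2),
          ((i + 1).choose m : ℝ) •
            B (formalDeriv A B f m v) (formalDeriv A B f (i + 1 - m) v) := by
  rw [formalDeriv]
  congr 1
  exact Finset.sum_attach (Finset.range (i + 2)) (fun m =>
    ((i + 1).choose m : ℝ) • B (formalDeriv A B f m v) (formalDeriv A B f (i + 1 - m) v))

lemma binom_sum_key (B : E →L[ℝ] E →L[ℝ] E) (x : ℕ → E) (i : ℕ) :
    ∑ m ∈ Finset.range (i + 2), ((i + 1).choose m : ℝ) •
        (B (x (m + 1)) (x (i + 1 - m)) + B (x m) (x (i + 2 - m)))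
      = ∑ m ∈ Finset.range (i + 3), ((i + 2).choose m : ℝ) • B (x m) (x (i + 2 - m)) := by
  have hRHS : ∑ m ∈ Finset.range (i + 3), ((i + 2).choose m : ℝ) • B (x m) (x (i + 2 - m))
      = (∑ m ∈ Finset.range (i + 2),
          ((i + 2).choose (m + 1) : ℝ) • B (x (m + 1)) (x (i + 2 - (m + 1))))
        + ((i + 2).choose 0 : ℝ) • B (x 0) (x (i + 2 - 0)) :=
    Finset.sum_range_succ' _ (i + 2)
  have hS2 : ∑ m ∈ Finset.range (i + 2), ((i + 1).choose m : ℝ) • B (x m) (x (i + 2 - m))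
      = (∑ m ∈ Finset.range (i + 1),
          ((i + 1).choose (m + 1) : ℝ) • B (x (m + 1)) (x (i + 2 - (m + 1))))
        + ((i + 1).choose 0 : ℝ) • B (x 0) (x (i + 2 - 0)) :=
    Finset.sum_range_succ' _ (i + 1)
  have hsub : ∀ m, i + 2 - (m + 1) = i + 1 - m := fun m => by omega
  have htop : ∑ m ∈ Finset.range (i + 2), ((i + 1).choose (m + 1) : ℝ) •
        B (x (m + 1)) (x (i + 1 - m))
      = ∑ m ∈ Finset.range (i + 1), ((i + 1).choose (m + 1) : ℝ) •
        B (x (m + 1)) (x (i + 1 - m)) := by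
    rw [Finset.sum_range_succ, Nat.choose_eq_zero_of_lt (by omega)]
    simp
  simp only [hsub] at hRHS hS2
  rw [hRHS]
  simp only [Nat.choose_succ_succ' (i + 1), Nat.cast_add, add_smul, Finset.sum_add_distrib,
    smul_add, hS2, htop]
  simp [Nat.choose_zero_right]
  abel

/-- Along a trajectory of the ODE, the derivative of `D^i ∘ γ` is `D^(i+1) ∘ γ`. -/
lemma hasDerivWithinAt_formalDeriv_comp (A : E →L[ℝ] E) (B : E →L[ℝ] E →L[ℝ] E) (f : E)
    (γ : ℝ → E)
    (hγ : ∀ t : ℝ, 0 ≤ t → HasDerivWithinAt γ (f - A (γ t) - B (γ t) (γ t)) (Ici 0) t)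
    (i : ℕ) :
    ∀ t : ℝ, 0 ≤ t → HasDerivWithinAt
      (fun s => formalDeriv (fun x => A x) (fun x y => B x y) f i (γ s))
      (formalDeriv (fun x => A x) (fun x y => B x y) f (i + 1) (γ t)) (Ici 0) t := by
  set D := formalDeriv (fun x => A x) (fun x y => B x y) f with hD
  have hD0 : ∀ v : E, D 0 v = v := fun v => formalDeriv_zero _ _ _ _
  have hD1 : ∀ v : E, D 1 v = f - A v - B v v := fun v => formalDeriv_one _ _ _ _
  have hDss : ∀ (i : ℕ) (v : E), D (i + 2) v =
      -(A (D (i + 1) v)) - ∑ m ∈ Finset.range (i + 2),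
        ((i + 1).choose m : ℝ) • B (D m v) (D (i + 1 - m) v) :=
    fun i v => formalDeriv_succ_succ _ _ _ _ _
  induction i using Nat.strong_induction_on with
  | _ i ih =>
    match i with
    | 0 =>
      intro t ht
      have h0 : (fun s => D 0 (γ s)) = γ := by
        funext s; exact formalDeriv_zero _ _ _ _
      rw [h0, show (0+1) = 1 from rfl, hD1]
      exact hγ t ht
    | 1 =>
      intro t ht
      have h1 : (fun s => D 1 (γ s)) = fun s => f - A (γ s) - B (γ s) (γ s) := by
        funext s; exact formalDeriv_one _ _ _ _
      rw [h1]
      have hAc : HasDerivWithinAt (fun s => A (γ s)) (A (D 1 (γ t))) (Ici 0) t := by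
        have := A.hasFDerivAt.comp_hasDerivWithinAt t (hγ t ht)
        rw [hD1]
        exact this
      have hBc : HasDerivWithinAt (fun s => B (γ s)) (B (D 1 (γ t))) (Ici 0) t := by
        have := B.hasFDerivAt.comp_hasDerivWithinAt t (hγ t ht)
        rw [hD1]
        exact this
      have hBB : HasDerivWithinAt (fun s => B (γ s) (γ s))
          ((B (D 1 (γ t))) (γ t) + B (γ t) (D 1 (γ t))) (Ici 0) t := by
        have := hBc.clm_apply (hγ t ht)
        simp only [hD1] at this ⊢
        exact this
      have := ((hasDerivWithinAt_const t (Ici (0:ℝ)) f).fun_sub hAc).fun_sub hBB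
      convert this using 1
      rw [show (1+1) = 0+2 from rfl, hDss 0]
      simp [Finset.sum_range_succ, hD0]
      abel
    | (n + 2) =>
      intro t ht
      have hexp : (fun s => D (n + 2) (γ s)) = fun s =>
          -(A (D (n + 1) (γ s))) - ∑ m ∈ Finset.range (n + 2),
            ((n + 1).choose m : ℝ) • B (D m (γ s)) (D (n + 1 - m) (γ s)) := by
        funext s; exact formalDeriv_succ_succ _ _ _ _ _
      rw [hexp]
      have hAc : HasDerivWithinAt (fun s => A (D (n + 1) (γ s))) (A (D (n + 2) (γ t)))
          (Ici 0) t :=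
        A.hasFDerivAt.comp_hasDerivWithinAt t (ih (n + 1) (by omega) t ht)
      have hterm : ∀ m ∈ Finset.range (n + 2), HasDerivWithinAt
          (fun s => ((n + 1).choose m : ℝ) • B (D m (γ s)) (D (n + 1 - m) (γ s)))
          (((n + 1).choose m : ℝ) •
            (B (D (m + 1) (γ t)) (D (n + 1 - m) (γ t))
              + B (D m (γ t)) (D (n + 2 - m) (γ t)))) (Ici 0) t := by
        intro m hm
        have hm' := Finset.mem_range.mp hm
        have h1 : HasDerivWithinAt (fun s => B (D m (γ s))) (B (D (m + 1) (γ t))) (Ici 0) t :=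
          B.hasFDerivAt.comp_hasDerivWithinAt t (ih m (by omega) t ht)
        have h2 : HasDerivWithinAt (fun s => D (n + 1 - m) (γ s))
            (D (n + 2 - m) (γ t)) (Ici 0) t := by
          have := ih (n + 1 - m) (by omega) t ht
          have : n + 1 - m + 1 = n + 2 - m := by omega
          rw [← this]
          exact ih (n + 1 - m) (by omega) t ht
        exact (h1.clm_apply h2).const_smul _
      have hsum := HasDerivWithinAt.fun_sum hterm
      have := (hAc.fun_neg).fun_sub hsum
      convert this using 1
      rw [show n + 2 + 1 = n + 1 + 2 from rfl, hDss (n + 1)]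
      congr 1
      exact (binom_sum_key B (fun m => D m (γ t)) n).symm


lemma contDiff_formalDeriv (A : E →L[ℝ] E) (B : E →L[ℝ] E →L[ℝ] E) (f : E) (i : ℕ) :
    ContDiff ℝ ⊤ (formalDeriv (fun x => A x) (fun x y => B x y) f i) := by
  induction i using Nat.strong_induction_on with
  | _ i ih =>
    match i with
    | 0 =>
      have : (formalDeriv (fun x => A x) (fun x y => B x y) f 0) = fun v : E => v := by
        funext v; exact formalDeriv_zero _ _ _ _
      rw [this]; exact contDiff_id
    | 1 =>
      have : (formalDeriv (fun x => A x) (fun x y => B x y) f 1) =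
          fun v => f - A v - B v v := by
        funext v; exact formalDeriv_one _ _ _ _
      rw [this]
      exact ((contDiff_const.sub A.contDiff).sub
        (B.isBoundedBilinearMap.contDiff.comp (contDiff_id.prodMk contDiff_id)))
    | (i + 2) =>
      have : (formalDeriv (fun x => A x) (fun x y => B x y) f (i+2)) =
          fun v => -(A (formalDeriv (fun x => A x) (fun x y => B x y) f (i + 1) v)) -
            ∑ m ∈ Finset.range (i + 2),
              ((i + 1).choose m : ℝ) •
                B (formalDeriv (fun x => A x) (fun x y => B x y) f m v)
                  (formalDeriv (fun x => A x) (fun x y => B x y) f (i + 1 - m) v) := by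
        funext v; exact formalDeriv_succ_succ _ _ _ _ _
      rw [this]
      refine ContDiff.sub ?_ ?_
      · exact (A.contDiff.comp (ih (i+1) (by omega))).neg
      · refine ContDiff.sum fun m hm => ?_
        have hm' := Finset.mem_range.mp hm
        exact ContDiff.const_smul _
          (B.isBoundedBilinearMap.contDiff.comp
            ((ih m (by omega)).prodMk (ih (i + 1 - m) (by omega))))

/-- Taylor remainder bound for the difference of two trajectories. -/
lemma taylor_diff_bound (A : E →L[ℝ] E) (B : E →L[ℝ] E →L[ℝ] E) (f : E)
    (R : ℝ) (Ψ : ℝ → E → E) (u v : E) (hu : ‖u‖ ≤ R) (hv : ‖v‖ ≤ R)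
    (hΨ0 : ∀ x, ‖x‖ ≤ R → Ψ 0 x = x)
    (hΨR : ∀ x, ‖x‖ ≤ R → ∀ t : ℝ, 0 ≤ t → ‖Ψ t x‖ ≤ R)
    (hΨode : ∀ x, ‖x‖ ≤ R → ∀ t : ℝ, 0 ≤ t →
      HasDerivWithinAt (fun s => Ψ s x)
        (f - A (Ψ t x) - B (Ψ t x) (Ψ t x)) (Ici 0) t)
    (N : ℕ) (L : ℝ) (hL0 : 0 ≤ L)
    (hL : ∀ m, m ≤ N → ∀ a, ‖a‖ ≤ R → ∀ b, ‖b‖ ≤ R →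
      ‖formalDeriv (fun x => A x) (fun x y => B x y) f m a -
        formalDeriv (fun x => A x) (fun x y => B x y) f m b‖ ≤ L * ‖a - b‖)
    (T : ℝ) (C : ℝ)
    (hC : ∀ t ∈ Icc (0:ℝ) T, ‖Ψ t v - Ψ t u‖ ≤ C) :
    ∀ n ℓ : ℕ, ℓ + n + 1 ≤ N → ∀ t ∈ Icc (0:ℝ) T,
      ‖(formalDeriv (fun x => A x) (fun x y => B x y) f ℓ (Ψ t v) -
          formalDeriv (fun x => A x) (fun x y => B x y) f ℓ (Ψ t u)) -
        ∑ m ∈ Finset.range (n + 1), (t ^ m / m.factorial : ℝ) •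
          (formalDeriv (fun x => A x) (fun x y => B x y) f (ℓ + m) v -
            formalDeriv (fun x => A x) (fun x y => B x y) f (ℓ + m) u)‖
      ≤ L * C * t ^ (n + 1) / (n + 1).factorial := by
  set D := formalDeriv (fun x => A x) (fun x y => B x y) f with hD
  have hγode : ∀ x, ‖x‖ ≤ R → ∀ (m : ℕ) (t : ℝ), 0 ≤ t →
      HasDerivWithinAt (fun s => D m (Ψ s x)) (D (m + 1) (Ψ t x)) (Ici 0) t := by
    intro x hx m t ht
    exact hasDerivWithinAt_formalDeriv_comp A B f (fun s => Ψ s x)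
      (fun t ht => hΨode x hx t ht) m t ht
  have hcont : ∀ x, ‖x‖ ≤ R → ∀ m : ℕ, ContinuousOn (fun s => D m (Ψ s x)) (Icc 0 T) := by
    intro x hx m s hs
    exact ((hγode x hx m s hs.1).continuousWithinAt).mono Icc_subset_Ici_self
  intro n
  induction n with
  | zero =>
    intro ℓ hℓ t ht
    have hder : ∀ x ∈ Icc (0:ℝ) T, HasDerivWithinAt
        (fun s => D ℓ (Ψ s v) - D ℓ (Ψ s u))
        (D (ℓ + 1) (Ψ x v) - D (ℓ + 1) (Ψ x u)) (Icc 0 T) x := fun x hx =>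
      ((hγode v hv ℓ x hx.1).sub (hγode u hu ℓ x hx.1)).mono Icc_subset_Ici_self
    have hbound : ∀ x ∈ Icc (0:ℝ) T,
        ‖D (ℓ + 1) (Ψ x v) - D (ℓ + 1) (Ψ x u)‖ ≤ L * C := by
      intro x hx
      calc ‖D (ℓ + 1) (Ψ x v) - D (ℓ + 1) (Ψ x u)‖
          ≤ L * ‖Ψ x v - Ψ x u‖ :=
            hL (ℓ + 1) (by omega) _ (hΨR v hv x hx.1) _ (hΨR u hu x hx.1)
        _ ≤ L * C := mul_le_mul_of_nonneg_left (hC x hx) hL0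
    have h0T : (0:ℝ) ∈ Icc (0:ℝ) T := ⟨le_refl 0, le_trans ht.1 ht.2⟩
    have key := Convex.norm_image_sub_le_of_norm_hasDerivWithin_le hder hbound
      (convex_Icc 0 T) h0T ht
    have hzero : D ℓ (Ψ 0 v) - D ℓ (Ψ 0 u) = D ℓ v - D ℓ u := by
      rw [hΨ0 v hv, hΨ0 u hu]
    rw [hzero] at key
    have hsum : ∑ m ∈ Finset.range (0 + 1), (t ^ m / m.factorial : ℝ) •
        (D (ℓ + m) v - D (ℓ + m) u) = D ℓ v - D ℓ u := by
      simp
    rw [hsum]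
    have heq : L * C * ‖t - 0‖ = L * C * t ^ (0 + 1) / ((0 + 1):ℕ).factorial := by
      rw [sub_zero, Real.norm_eq_abs, abs_of_nonneg ht.1]
      norm_num
    exact key.trans_eq heq
  | succ n ihn =>
    intro ℓ hℓ t ht
    set z : ℕ → E := fun i => D i v - D i u with hz
    set φ : ℝ → E := fun s => (D ℓ (Ψ s v) - D ℓ (Ψ s u)) -
      ∑ m ∈ Finset.range (n + 2), (s ^ m / m.factorial : ℝ) • z (ℓ + m) with hφ
    set φ' : ℝ → E := fun s => (D (ℓ + 1) (Ψ s v) - D (ℓ + 1) (Ψ s u)) -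
      ∑ m ∈ Finset.range (n + 1), (s ^ m / m.factorial : ℝ) • z (ℓ + 1 + m) with hφ'
    have hsumderiv : ∀ x : ℝ, HasDerivAt
        (fun s => ∑ m ∈ Finset.range (n + 2), (s ^ m / m.factorial : ℝ) • z (ℓ + m))
        (∑ m ∈ Finset.range (n + 1), (x ^ m / m.factorial : ℝ) • z (ℓ + 1 + m)) x := by
      intro x
      have hterm : ∀ m ∈ Finset.range (n + 2), HasDerivAt
          (fun s : ℝ => (s ^ m / m.factorial : ℝ) • z (ℓ + m))
          (((m * x ^ (m - 1) : ℝ) / m.factorial) • z (ℓ + m)) x := by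
        intro m _
        exact ((hasDerivAt_pow m x).div_const _).smul_const _
      have := HasDerivAt.fun_sum hterm
      convert this using 1
      rw [Finset.sum_range_succ' (fun m =>
        (((m : ℝ) * x ^ (m - 1)) / m.factorial) • z (ℓ + m)) (n + 1)]
      have hlast : (((0 : ℕ) * x ^ (0 - 1) : ℝ) / (0:ℕ).factorial) • z (ℓ + 0) = 0 := by
        norm_num
      rw [hlast, add_zero]
      refine Finset.sum_congr rfl fun m _ => ?_
      have hidx : ℓ + (m + 1) = ℓ + 1 + m := by omega
      have hcoef : ((m + 1 : ℕ) : ℝ) * x ^ (m + 1 - 1) / ((m + 1 : ℕ).factorial : ℝ)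
          = x ^ m / (m.factorial : ℝ) := by
        rw [Nat.factorial_succ]
        push_cast
        have hm1 : ((m : ℝ) + 1) ≠ 0 := by positivity
        have hmf : ((m.factorial : ℝ)) ≠ 0 := by positivity
        field_simp
      rw [hidx, hcoef]
    have hφder : ∀ x ∈ Ico (0:ℝ) T, HasDerivWithinAt φ (φ' x) (Ici x) x := by
      intro x hx
      refine HasDerivWithinAt.sub ?_ ((hsumderiv x).hasDerivWithinAt)
      exact ((hγode v hv ℓ x hx.1).sub (hγode u hu ℓ x hx.1)).mono
        (Ici_subset_Ici.mpr hx.1)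
    have hφcont : ContinuousOn φ (Icc 0 T) := by
      refine ContinuousOn.sub ((hcont v hv ℓ).sub (hcont u hu ℓ)) ?_
      refine Continuous.continuousOn ?_
      exact continuous_finset_sum _ fun m _ =>
        ((continuous_pow m).div_const _).smul continuous_const
    have hφ0 : ‖φ 0‖ ≤ L * C * 0 ^ (n + 2) / (n + 2).factorial := by
      have hs0 : ∑ m ∈ Finset.range (n + 2), ((0:ℝ) ^ m / m.factorial : ℝ) • z (ℓ + m)
          = z ℓ := by
        rw [Finset.sum_eq_single_of_mem 0 (Finset.mem_range.mpr (by omega))]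
        · simp
        · intro b _ hb
          simp [zero_pow hb]
      have : φ 0 = 0 := by
        rw [hφ]
        simp only [hs0, hΨ0 v hv, hΨ0 u hu]
        rw [hz]
        exact sub_self _
      rw [this]
      simp
    have hB : ∀ x : ℝ, HasDerivAt (fun s => L * C * s ^ (n + 2) / (n + 2).factorial)
        (L * C * x ^ (n + 1) / (n + 1).factorial) x := by
      intro x
      have := ((hasDerivAt_pow (n + 2) x).const_mul (L * C)).div_const
        ((n + 2).factorial : ℝ)
      refine this.congr_deriv ?_
      rw [show ((n:ℕ) + 2).factorial = (n + 2) * (n + 1).factorial from Nat.factorial_succ _]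
      push_cast
      have h1 : ((n:ℝ) + 2) ≠ 0 := by positivity
      have h2 : (((n + 1).factorial : ℝ)) ≠ 0 := by positivity
      field_simp
    have hbound : ∀ x ∈ Ico (0:ℝ) T, ‖φ' x‖ ≤ L * C * x ^ (n + 1) / (n + 1).factorial := by
      intro x hx
      exact ihn (ℓ + 1) (by omega) x ⟨hx.1, le_of_lt hx.2⟩
    have := image_norm_le_of_norm_deriv_right_le_deriv_boundary hφcont hφder hφ0 hB hbound ht
    exact this

/-- Grönwall: Lipschitz dependence of trajectories on the initial condition. -/
lemma gronwall_traj (A : E →L[ℝ] E) (B : E →L[ℝ] E →L[ℝ] E) (f : E)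
    (R : ℝ) (hR0 : 0 ≤ R) (Ψ : ℝ → E → E)
    (hΨ0 : ∀ x, ‖x‖ ≤ R → Ψ 0 x = x)
    (hΨR : ∀ x, ‖x‖ ≤ R → ∀ t : ℝ, 0 ≤ t → ‖Ψ t x‖ ≤ R)
    (hΨode : ∀ x, ‖x‖ ≤ R → ∀ t : ℝ, 0 ≤ t →
      HasDerivWithinAt (fun s => Ψ s x)
        (f - A (Ψ t x) - B (Ψ t x) (Ψ t x)) (Ici 0) t) :
    ∃ K : ℝ, 0 ≤ K ∧ ∀ u v : E, ‖u‖ ≤ R → ‖v‖ ≤ R → ∀ T : ℝ, 0 ≤ T →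
      ∀ t ∈ Icc (0:ℝ) T, ‖Ψ t v - Ψ t u‖ ≤ ‖v - u‖ * Real.exp (K * T) := by
  set K₀ : ℝ := ‖A‖ + 2 * ‖B‖ * R with hK₀
  have hK₀0 : 0 ≤ K₀ := by positivity
  set K : NNReal := K₀.toNNReal with hK
  have hKcoe : (K : ℝ) = K₀ := Real.coe_toNNReal _ hK₀0
  refine ⟨K₀, hK₀0, ?_⟩
  intro u v hu hv T hT t ht
  have hlip : ∀ s : ℝ, LipschitzOnWith K (fun x => f - A x - B x x)
      (Metric.closedBall (0:E) R) := by
    intro _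
    rw [lipschitzOnWith_iff_norm_sub_le]
    intro a ha b hb
    rw [mem_closedBall_zero_iff] at ha hb
    have hexp : (f - A a - B a a) - (f - A b - B b b)
        = -(A (a - b)) - (B a (a - b) + B (a - b) b) := by
      simp only [map_sub, ContinuousLinearMap.sub_apply, ContinuousLinearMap.map_sub]
      abel
    rw [hexp, hKcoe]
    have h1 : ‖A (a - b)‖ ≤ ‖A‖ * ‖a - b‖ := A.le_opNorm _
    have h2 : ‖B a (a - b)‖ ≤ ‖B‖ * ‖a‖ * ‖a - b‖ := B.le_opNorm₂ _ _
    have h3 : ‖B (a - b) b‖ ≤ ‖B‖ * ‖a - b‖ * ‖b‖ := B.le_opNorm₂ _ _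
    have hBn : 0 ≤ ‖B‖ := B.opNorm_nonneg
    have hab : 0 ≤ ‖a - b‖ := norm_nonneg _
    calc ‖-(A (a - b)) - (B a (a - b) + B (a - b) b)‖
        ≤ ‖A (a - b)‖ + (‖B a (a - b)‖ + ‖B (a - b) b‖) := by
          refine le_trans (norm_sub_le _ _) ?_
          rw [norm_neg]
          exact add_le_add le_rfl (norm_add_le _ _)
      _ ≤ ‖A‖ * ‖a - b‖ + (‖B‖ * ‖a‖ * ‖a - b‖ + ‖B‖ * ‖a - b‖ * ‖b‖) := by
          exact add_le_add h1 (add_le_add h2 h3)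
      _ ≤ (‖A‖ + 2 * ‖B‖ * R) * ‖a - b‖ := by
          have e2 : ‖B‖ * ‖a‖ * ‖a - b‖ ≤ ‖B‖ * R * ‖a - b‖ :=
            mul_le_mul_of_nonneg_right (mul_le_mul_of_nonneg_left ha hBn) hab
          have e3 : ‖B‖ * ‖a - b‖ * ‖b‖ ≤ ‖B‖ * ‖a - b‖ * R :=
            mul_le_mul_of_nonneg_left hb (mul_nonneg hBn hab)
          nlinarith
  have hcont : ∀ x, ‖x‖ ≤ R → ContinuousOn (fun s => Ψ s x) (Icc 0 T) := by
    intro x hx s hs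
    exact ((hΨode x hx s hs.1).continuousWithinAt).mono Icc_subset_Ici_self
  have hder : ∀ x, ‖x‖ ≤ R → ∀ s ∈ Ico (0:ℝ) T, HasDerivWithinAt (fun r => Ψ r x)
      ((fun (_ : ℝ) (y : E) => f - A y - B y y) s (Ψ s x)) (Ici s) s := by
    intro x hx s hs
    exact (hΨode x hx s hs.1).mono (Ici_subset_Ici.mpr hs.1)
  have hmem : ∀ x, ‖x‖ ≤ R → ∀ s ∈ Ico (0:ℝ) T, Ψ s x ∈ Metric.closedBall (0:E) R := by
    intro x hx s hs
    rw [mem_closedBall_zero_iff]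
    exact hΨR x hx s hs.1
  have h0 : dist (Ψ 0 v) (Ψ 0 u) ≤ dist v u := by
    rw [hΨ0 v hv, hΨ0 u hu]
  have := dist_le_of_trajectories_ODE_of_mem (fun s _ => hlip s)
    (hcont v hv) (hder v hv) (hmem v hv)
    (hcont u hu) (hder u hu) (hmem u hu) h0 t ht
  rw [dist_eq_norm, dist_eq_norm] at this
  refine this.trans ?_
  rw [sub_zero, hKcoe]
  have : Real.exp (K₀ * t) ≤ Real.exp (K₀ * T) :=
    Real.exp_le_exp.mpr (by nlinarith [ht.2])
  nlinarith [norm_nonneg (v - u), Real.exp_pos (K₀ * t)]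

/-- Lipschitz bound for the formal derivatives on a closed ball
(finite-dimensional setting). -/
lemma formalDeriv_lipschitz_on_ball [FiniteDimensional ℝ E]
    (A : E →L[ℝ] E) (B : E →L[ℝ] E →L[ℝ] E) (f : E) (R : ℝ) (m : ℕ) :
    ∃ Lm : ℝ, 0 ≤ Lm ∧ ∀ a, ‖a‖ ≤ R → ∀ b, ‖b‖ ≤ R →
      ‖formalDeriv (fun x => A x) (fun x y => B x y) f m a -
        formalDeriv (fun x => A x) (fun x y => B x y) f m b‖ ≤ Lm * ‖a - b‖ := by
  set D := formalDeriv (fun x => A x) (fun x y => B x y) f with hD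
  have hcd : ContDiff ℝ ⊤ (D m) := contDiff_formalDeriv A B f m
  have hcf : Continuous (fun x => ‖fderiv ℝ (D m) x‖) :=
    (hcd.continuous_fderiv (by simp)).norm
  obtain ⟨C, hC⟩ := (isCompact_closedBall (0:E) R).exists_bound_of_continuousOn
    hcf.continuousOn
  refine ⟨max C 0, le_max_right _ _, ?_⟩
  intro a ha b hb
  have hconv : Convex ℝ (Metric.closedBall (0:E) R) := convex_closedBall _ _
  have hderiv : ∀ x ∈ Metric.closedBall (0:E) R, HasFDerivWithinAt (D m)
      (fderiv ℝ (D m) x) (Metric.closedBall (0:E) R) x := fun x _ =>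
    ((hcd.differentiable (by simp)) x).hasFDerivAt.hasFDerivWithinAt
  have hbd : ∀ x ∈ Metric.closedBall (0:E) R, ‖fderiv ℝ (D m) x‖ ≤ max C 0 :=
    fun x hx => le_trans (le_trans (le_of_eq (norm_norm _).symm) (hC x hx)) (le_max_left _ _)
  exact hconv.norm_image_sub_le_of_norm_hasFDerivWithin_le hderiv hbd
    (mem_closedBall_zero_iff.mpr hb) (mem_closedBall_zero_iff.mpr ha)

/-- Vandermonde recovery: the Taylor coefficients can be recovered linearly from
the observations at equispaced indices. -/
lemma vandermonde_recovery (n : ℕ) {F : Type*} [NormedAddCommGroup F] [NormedSpace ℝ F] :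
    ∃ Nmat : Matrix (Fin (n + 1)) (Fin (n + 1)) ℝ,
      ∀ y : Fin (n + 1) → F, ∀ m : Fin (n + 1),
        y m = ∑ i : Fin (n + 1), Nmat m i •
          (∑ m' : Fin (n + 1), ((i : ℕ) : ℝ) ^ (m' : ℕ) • y m') := by
  set M : Matrix (Fin (n + 1)) (Fin (n + 1)) ℝ :=
    Matrix.vandermonde (fun i : Fin (n + 1) => ((i : ℕ) : ℝ)) with hM
  have hdet : M.det ≠ 0 := by
    rw [hM, Matrix.det_vandermonde]
    refine Finset.prod_ne_zero_iff.mpr fun i _ => Finset.prod_ne_zero_iff.mpr fun i' hi' => ?_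
    have hlt : i < i' := Finset.mem_Ioi.mp hi'
    have hlt' : (i : ℕ) < (i' : ℕ) := hlt
    have : ((i : ℕ) : ℝ) < ((i' : ℕ) : ℝ) := by exact_mod_cast hlt'
    exact sub_ne_zero.mpr (ne_of_gt this)
  have hNM : M⁻¹ * M = 1 := Matrix.nonsing_inv_mul M (Ne.isUnit hdet)
  refine ⟨M⁻¹, ?_⟩
  intro y m
  symm
  have hobs : ∀ i : Fin (n + 1), (∑ m' : Fin (n + 1), ((i : ℕ) : ℝ) ^ (m' : ℕ) • y m')
      = ∑ m' : Fin (n + 1), M i m' • y m' := by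
    intro i
    refine Finset.sum_congr rfl fun m' _ => ?_
    rw [hM]
    rfl
  calc ∑ i : Fin (n + 1), M⁻¹ m i • (∑ m' : Fin (n + 1), ((i:ℕ):ℝ) ^ (m' : ℕ) • y m')
      = ∑ i : Fin (n + 1), ∑ m' : Fin (n + 1), (M⁻¹ m i * M i m') • y m' := by
        refine Finset.sum_congr rfl fun i _ => ?_
        rw [hobs i, Finset.smul_sum]
        refine Finset.sum_congr rfl fun m' _ => ?_
        rw [smul_smul]
    _ = ∑ m' : Fin (n + 1), (∑ i : Fin (n + 1), M⁻¹ m i * M i m') • y m' := by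
        rw [Finset.sum_comm]
        refine Finset.sum_congr rfl fun m' _ => ?_
        rw [Finset.sum_smul]
    _ = ∑ m' : Fin (n + 1), ((1 : Matrix (Fin (n+1)) (Fin (n+1)) ℝ) m m') • y m' := by
        refine Finset.sum_congr rfl fun m' _ => ?_
        rw [← Matrix.mul_apply, hNM]
    _ = y m := by
        simp [Matrix.one_apply]
/-- Key lower bound: the observed formal derivatives dominate a multiple of the
distance to `u`, on the ball of radius `R`. -/
lemma key_lower_bound {d dO : ℕ}
    (A : EuclideanSpace ℝ (Fin d) →L[ℝ] EuclideanSpace ℝ (Fin d))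
    (B : EuclideanSpace ℝ (Fin d) →L[ℝ] EuclideanSpace ℝ (Fin d) →L[ℝ]
      EuclideanSpace ℝ (Fin d))
    (f : EuclideanSpace ℝ (Fin d)) (R : ℝ) (hR0 : 0 ≤ R) (hA : 0 < ‖A‖)
    (H : EuclideanSpace ℝ (Fin d) →L[ℝ] EuclideanSpace ℝ (Fin dO))
    (u : EuclideanSpace ℝ (Fin d))
    (j : ℕ)
    (huniq : ∀ v : EuclideanSpace ℝ (Fin d), ‖v‖ ≤ R →
      (∀ i ≤ j, H (formalDeriv (fun x => A x) (fun x y => B x y) f i v) =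
        H (formalDeriv (fun x => A x) (fun x y => B x y) f i u)) → v = u)
    (hspan : Submodule.span ℝ
      ((fun p : ℕ × Fin dO => gradient
        (fun v => H (formalDeriv (fun x => A x) (fun x y => B x y) f p.1 v) p.2) u) ''
        {p : ℕ × Fin dO | p.1 ≤ j}) = ⊤) :
    ∃ c₂ : ℝ, 0 < c₂ ∧ ∀ v : EuclideanSpace ℝ (Fin d), ‖v‖ ≤ R →
      c₂ * ‖v - u‖ ≤ ∑ m ∈ Finset.range (j + 1),
        ‖H (formalDeriv (fun x => A x) (fun x y => B x y) f m v) -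
          H (formalDeriv (fun x => A x) (fun x y => B x y) f m u)‖ := by
  set D := formalDeriv (fun x => A x) (fun x y => B x y) f with hD
  have hnontriv : Nontrivial (EuclideanSpace ℝ (Fin d)) := by
    by_contra hcon
    rw [not_nontrivial_iff_subsingleton] at hcon
    have : A = 0 := ContinuousLinearMap.ext fun x => Subsingleton.elim _ _
    rw [this, norm_zero] at hA
    exact lt_irrefl 0 hA
  have hdiff : ∀ m : ℕ, Differentiable ℝ (D m) := fun m =>
    (contDiff_formalDeriv A B f m).differentiable (by simp)
  -- relation between the gradients and the fderivs
  have hgradinner : ∀ (m : ℕ) (i : Fin dO) (x : EuclideanSpace ℝ (Fin d)),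
      (inner ℝ (gradient (fun v => H (D m v) i) u) x : ℝ)
        = H (fderiv ℝ (D m) u x) i := by
    intro m i x
    have hfd : HasFDerivAt (fun v => H (D m v) i)
        ((EuclideanSpace.proj i).comp (H.comp (fderiv ℝ (D m) u))) u := by
      have h1 : HasFDerivAt (D m) (fderiv ℝ (D m) u) u := (hdiff m u).hasFDerivAt
      exact ((EuclideanSpace.proj i).hasFDerivAt.comp u (H.hasFDerivAt.comp u h1))
    rw [gradient, InnerProductSpace.toDual_symm_apply, hfd.fderiv]
    rfl
  -- the auxiliary homogeneous function
  set g : EuclideanSpace ℝ (Fin d) → ℝ := fun x => ∑ m ∈ Finset.range (j + 1), ‖H (fderiv ℝ (D m) u x)‖ with hg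
  have hgcont : Continuous g := by
    refine continuous_finset_sum _ fun m _ => ?_
    exact (H.continuous.comp (fderiv ℝ (D m) u).continuous).norm
  have hgnonneg : ∀ x, 0 ≤ g x := fun x =>
    Finset.sum_nonneg fun m _ => norm_nonneg _
  have hgzero : ∀ x : EuclideanSpace ℝ (Fin d), g x = 0 → x = 0 := by
    intro x hx
    have hterm : ∀ m ∈ Finset.range (j + 1), H (fderiv ℝ (D m) u x) = 0 := by
      intro m hm
      have := (Finset.sum_eq_zero_iff_of_nonneg fun m _ => norm_nonneg
        (H (fderiv ℝ (D m) u x))).mp hx m hm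
      exact norm_eq_zero.mp this
    -- every generator is orthogonal to x
    have hbase : ∀ s ∈ ((fun p : ℕ × Fin dO => gradient
        (fun v => H (D p.1 v) p.2) u) '' {p : ℕ × Fin dO | p.1 ≤ j}),
        (inner ℝ s x : ℝ) = 0 := by
      rintro s ⟨p, hp, rfl⟩
      have hpj : p.1 ≤ j := hp
      rw [hgradinner p.1 p.2 x]
      have : H (fderiv ℝ (D p.1) u x) = 0 :=
        hterm p.1 (Finset.mem_range.mpr (by omega))
      rw [this]
      rfl
    have hall : ∀ y : EuclideanSpace ℝ (Fin d), (inner ℝ y x : ℝ) = 0 := by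
      intro y
      have hy : y ∈ Submodule.span ℝ ((fun p : ℕ × Fin dO => gradient
          (fun v => H (D p.1 v) p.2) u) '' {p : ℕ × Fin dO | p.1 ≤ j}) := by
        rw [hspan]
        exact Submodule.mem_top
      refine Submodule.span_induction (p := fun y _ => (inner ℝ y x : ℝ) = 0)
        hbase (inner_zero_left x) ?_ ?_ hy
      · intro a b _ _ ha hb
        rw [inner_add_left, ha, hb, add_zero]
      · intro r a _ ha
        rw [real_inner_smul_left, ha, mul_zero]
    have := hall x
    exact inner_self_eq_zero.mp this
  -- minimum on the unit sphere
  have hsphne : (Metric.sphere (0:EuclideanSpace ℝ (Fin d)) 1).Nonempty :=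
    NormedSpace.sphere_nonempty.mpr (by norm_num)
  obtain ⟨x₀, hx₀mem, hx₀min⟩ := (isCompact_sphere (0:EuclideanSpace ℝ (Fin d)) 1).exists_isMinOn hsphne
    hgcont.continuousOn
  set c₀ : ℝ := g x₀ with hc₀
  have hc₀pos : 0 < c₀ := by
    rcases lt_or_eq_of_le (hgnonneg x₀) with h | h
    · exact h
    · exfalso
      have hx0 : x₀ = 0 := hgzero x₀ h.symm
      rw [mem_sphere_zero_iff_norm] at hx₀mem
      rw [hx0, norm_zero] at hx₀mem
      norm_num at hx₀mem
  -- homogeneity and global lower bound for g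
  have hghom : ∀ (r : ℝ) (x : EuclideanSpace ℝ (Fin d)), g (r • x) = |r| * g x := by
    intro r x
    rw [hg]
    simp only [map_smul, norm_smul, Real.norm_eq_abs]
    rw [Finset.mul_sum]
  have hglow : ∀ x : EuclideanSpace ℝ (Fin d), c₀ * ‖x‖ ≤ g x := by
    intro x
    rcases eq_or_ne x 0 with rfl | hx
    · simp [hgnonneg 0]
    · have hnx : (0:ℝ) < ‖x‖ := norm_pos_iff.mpr hx
      have hunit : (‖x‖⁻¹ • x) ∈ Metric.sphere (0:EuclideanSpace ℝ (Fin d)) 1 := by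
        rw [mem_sphere_zero_iff_norm, norm_smul, Real.norm_eq_abs,
          abs_of_pos (inv_pos.mpr hnx)]
        field_simp
      have hle : c₀ ≤ g (‖x‖⁻¹ • x) := hx₀min hunit
      have hgx : g (‖x‖⁻¹ • x) = ‖x‖⁻¹ * g x := by
        rw [hghom, abs_of_pos (inv_pos.mpr hnx)]
      rw [hgx] at hle
      calc c₀ * ‖x‖ ≤ (‖x‖⁻¹ * g x) * ‖x‖ := by
            exact mul_le_mul_of_nonneg_right hle (le_of_lt hnx)
        _ = g x := by field_simp
  -- little-o: approximation near u
  set Zr : ℕ → EuclideanSpace ℝ (Fin d) → EuclideanSpace ℝ (Fin dO) := fun m v =>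
    H (D m v - D m u - fderiv ℝ (D m) u (v - u)) with hZr
  have hlo : (fun v => ∑ m ∈ Finset.range (j + 1), ‖Zr m v‖) =o[nhds u]
      (fun v => v - u) := by
    refine Asymptotics.IsLittleO.fun_sum fun m _ => ?_
    have h1 : (fun v => D m v - D m u - fderiv ℝ (D m) u (v - u)) =o[nhds u]
        (fun v => v - u) := (hdiff m u).hasFDerivAt.isLittleO
    have h2 : (fun v => Zr m v) =o[nhds u] (fun v => v - u) :=
      (H.isBigO_comp _ _).trans_isLittleO h1
    exact h2.norm_left
  have hev := hlo.def (half_pos hc₀pos)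
  rw [Metric.eventually_nhds_iff] at hev
  obtain ⟨ε, hεpos, hε⟩ := hev
  -- local estimate
  have hlocal : ∀ v : EuclideanSpace ℝ (Fin d), dist v u < ε →
      (c₀ / 2) * ‖v - u‖ ≤ ∑ m ∈ Finset.range (j + 1), ‖H (D m v) - H (D m u)‖ := by
    intro v hvd
    have happ := hε hvd
    have happ' : ∑ m ∈ Finset.range (j + 1), ‖Zr m v‖ ≤ c₀ / 2 * ‖v - u‖ := by
      have hnn : 0 ≤ ∑ m ∈ Finset.range (j + 1), ‖Zr m v‖ :=
        Finset.sum_nonneg fun m _ => norm_nonneg _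
      calc ∑ m ∈ Finset.range (j + 1), ‖Zr m v‖
          = ‖∑ m ∈ Finset.range (j + 1), ‖Zr m v‖‖ := (Real.norm_of_nonneg hnn).symm
        _ ≤ c₀ / 2 * ‖v - u‖ := happ
    have hptwise : ∀ m ∈ Finset.range (j + 1),
        ‖H (fderiv ℝ (D m) u (v - u))‖ - ‖H (D m v) - H (D m u)‖ ≤ ‖Zr m v‖ := by
      intro m _
      have : H (D m v) - H (D m u) - H (fderiv ℝ (D m) u (v - u)) = Zr m v := by
        rw [hZr]
        simp only [map_sub]
      calc ‖H (fderiv ℝ (D m) u (v - u))‖ - ‖H (D m v) - H (D m u)‖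
          ≤ ‖H (fderiv ℝ (D m) u (v - u)) - (H (D m v) - H (D m u))‖ :=
            norm_sub_norm_le _ _
        _ = ‖H (D m v) - H (D m u) - H (fderiv ℝ (D m) u (v - u))‖ := norm_sub_rev _ _
        _ = ‖Zr m v‖ := by rw [this]
    have hsums : g (v - u) - ∑ m ∈ Finset.range (j + 1), ‖H (D m v) - H (D m u)‖
        ≤ ∑ m ∈ Finset.range (j + 1), ‖Zr m v‖ := by
      rw [hg, ← Finset.sum_sub_distrib]
      exact Finset.sum_le_sum hptwise
    have := hglow (v - u)
    linarith
  -- the annulus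
  set Sset : Set (EuclideanSpace ℝ (Fin d)) := {v : EuclideanSpace ℝ (Fin d) | ‖v‖ ≤ R ∧ ε ≤ ‖v - u‖} with hSset
  set Z : EuclideanSpace ℝ (Fin d) → ℝ := fun v => ∑ m ∈ Finset.range (j + 1), ‖H (D m v) - H (D m u)‖ with hZ
  have hZcont : Continuous Z := by
    refine continuous_finset_sum _ fun m _ => ?_
    exact ((H.continuous.comp (contDiff_formalDeriv A B f m).continuous).sub
      continuous_const).norm
  have hZnonneg : ∀ v, 0 ≤ Z v := fun v => Finset.sum_nonneg fun m _ => norm_nonneg _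
  have hZpos : ∀ v ∈ Sset, 0 < Z v := by
    rintro v ⟨hvR, hvε⟩
    rcases lt_or_eq_of_le (hZnonneg v) with h | h
    · exact h
    · exfalso
      have hterm : ∀ m ∈ Finset.range (j + 1), H (D m v) = H (D m u) := by
        intro m hm
        have := (Finset.sum_eq_zero_iff_of_nonneg fun m _ => norm_nonneg
          (H (D m v) - H (D m u))).mp h.symm m hm
        exact sub_eq_zero.mp (norm_eq_zero.mp this)
      have : v = u := huniq v hvR fun i hi =>
        hterm i (Finset.mem_range.mpr (by omega))

      rw [this, sub_self, norm_zero] at hvε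
      linarith
  have hw : ∃ w₀ : ℝ, 0 < w₀ ∧ ∀ v ∈ Sset, w₀ ≤ Z v := by
    rcases Set.eq_empty_or_nonempty Sset with hemp | hne
    · exact ⟨1, one_pos, fun v hv => absurd (hemp ▸ hv) (Set.notMem_empty v)⟩
    · have hclosed : IsClosed Sset := by
        have h1 : IsClosed {v : EuclideanSpace ℝ (Fin d) | ‖v‖ ≤ R} := isClosed_le continuous_norm continuous_const
        have h2 : IsClosed {v : EuclideanSpace ℝ (Fin d) | ε ≤ ‖v - u‖} :=
          isClosed_le continuous_const ((continuous_id.sub continuous_const).norm)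
        have : Sset = {v : EuclideanSpace ℝ (Fin d) | ‖v‖ ≤ R} ∩ {v : EuclideanSpace ℝ (Fin d) | ε ≤ ‖v - u‖} := rfl
        rw [this]
        exact h1.inter h2
      have hcompact : IsCompact Sset :=
        (isCompact_closedBall (0:EuclideanSpace ℝ (Fin d)) R).of_isClosed_subset hclosed
          (fun v hv => mem_closedBall_zero_iff.mpr hv.1)
      obtain ⟨v₀, hv₀S, hv₀min⟩ := hcompact.exists_isMinOn hne hZcont.continuousOn
      exact ⟨Z v₀, hZpos v₀ hv₀S, fun v hv => hv₀min hv⟩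
  obtain ⟨w₀, hw₀pos, hw₀⟩ := hw
  refine ⟨min (c₀ / 2) (w₀ / (R + ‖u‖ + 1)), lt_min (half_pos hc₀pos)
    (div_pos hw₀pos (by positivity)), ?_⟩
  intro v hvR
  rcases lt_or_ge (dist v u) ε with hcase | hcase
  · calc min (c₀ / 2) (w₀ / (R + ‖u‖ + 1)) * ‖v - u‖
        ≤ (c₀ / 2) * ‖v - u‖ :=
          mul_le_mul_of_nonneg_right (min_le_left _ _) (norm_nonneg _)
      _ ≤ _ := hlocal v hcase
  · have hvS : v ∈ Sset := ⟨hvR, by rwa [dist_eq_norm] at hcase⟩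
    have hvu : ‖v - u‖ ≤ R + ‖u‖ :=
      le_trans (norm_sub_le v u) (add_le_add_left hvR _)
    calc min (c₀ / 2) (w₀ / (R + ‖u‖ + 1)) * ‖v - u‖
        ≤ (w₀ / (R + ‖u‖ + 1)) * ‖v - u‖ :=
          mul_le_mul_of_nonneg_right (min_le_right _ _) (norm_nonneg _)
      _ ≤ (w₀ / (R + ‖u‖ + 1)) * (R + ‖u‖ + 1) := by
          refine mul_le_mul_of_nonneg_left ?_ (le_of_lt (div_pos hw₀pos (by positivity)))
          linarith
      _ = w₀ := by field_simp
      _ ≤ Z v := hw₀ v hvS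

set_option maxHeartbeats 2000000 in
/-- Proposition: assumptions on derivatives imply the assumption
for the upper bounds: if the observed formal derivatives up to order `j`
uniquely determine the initial condition `u` in `B_R` and their coordinate
gradients span `ℝ^d`, then for all sufficiently small interobservation times
`h` and every `k ≥ j` there is `c > 0` with
`max_{0≤i≤k} ‖H Ψ_{ih}(u) - H Ψ_{ih}(v)‖ ≥ c ‖v - u‖` on `B_R`. -/
theorem derivative_assumptions_imply_upper_bound_assumption {d dO : ℕ}
    (A : EuclideanSpace ℝ (Fin d) →L[ℝ] EuclideanSpace ℝ (Fin d))
    (B : EuclideanSpace ℝ (Fin d) →L[ℝ] EuclideanSpace ℝ (Fin d) →L[ℝ] EuclideanSpace ℝ (Fin d))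
    (f : EuclideanSpace ℝ (Fin d))
    (R δ : ℝ) (hR : 0 < R) (hδ : 0 < δ) (hA : 0 < ‖A‖)
    (htrap : ∀ x : EuclideanSpace ℝ (Fin d),
      ‖x‖ ∈ Icc R (R + δ) → (inner ℝ (f - A x - B x x) x : ℝ) ≤ 0)
    (Ψ : ℝ → EuclideanSpace ℝ (Fin d) → EuclideanSpace ℝ (Fin d))
    (hΨ0 : ∀ x, ‖x‖ ≤ R → Ψ 0 x = x)
    (hΨR : ∀ x, ‖x‖ ≤ R → ∀ t : ℝ, 0 ≤ t → ‖Ψ t x‖ ≤ R)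
    (hΨode : ∀ x, ‖x‖ ≤ R → ∀ t : ℝ, 0 ≤ t →
      HasDerivWithinAt (fun s => Ψ s x)
        (f - A (Ψ t x) - B (Ψ t x) (Ψ t x)) (Ici 0) t)
    (H : EuclideanSpace ℝ (Fin d) →L[ℝ] EuclideanSpace ℝ (Fin dO))
    (u : EuclideanSpace ℝ (Fin d)) (hu : ‖u‖ < R)
    (j : ℕ)
    -- Assumption 8 (i): uniqueness of the solution of the system of equations
    (huniq : ∀ v : EuclideanSpace ℝ (Fin d), ‖v‖ ≤ R →
      (∀ i ≤ j, H (formalDeriv (fun x => A x) (fun x y => B x y) f i v) =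
        H (formalDeriv (fun x => A x) (fun x y => B x y) f i u)) → v = u)
    -- Assumption 8 (ii): the gradients span `ℝ^d`
    (hspan : Submodule.span ℝ
      ((fun p : ℕ × Fin dO => gradient
        (fun v => H (formalDeriv (fun x => A x) (fun x y => B x y) f p.1 v) p.2) u) ''
        {p : ℕ × Fin dO | p.1 ≤ j}) = ⊤) :
    ∃ h₀ : ℝ, 0 < h₀ ∧ ∀ h : ℝ, 0 < h → h ≤ h₀ → ∀ k : ℕ, j ≤ k →
      ∃ c : ℝ, 0 < c ∧ ∀ v : EuclideanSpace ℝ (Fin d), ‖v‖ ≤ R →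
        ∃ i ≤ k, c * ‖v - u‖ ≤ ‖H (Ψ (i * h) u) - H (Ψ (i * h) v)‖ := by
  set D := formalDeriv (fun x => A x) (fun x y => B x y) f with hD
  have hu' : ‖u‖ ≤ R := le_of_lt hu
  -- the key lower bound on the formal derivative observations
  obtain ⟨c₂, hc₂pos, hc₂⟩ := key_lower_bound A B f R (le_of_lt hR) hA H u j huniq hspan
  -- uniform Lipschitz constant for D m, m ≤ j + 1, on the ball
  have hLm : ∀ m : ℕ, ∃ Lm : ℝ, 0 ≤ Lm ∧ ∀ a, ‖a‖ ≤ R → ∀ b, ‖b‖ ≤ R →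
      ‖D m a - D m b‖ ≤ Lm * ‖a - b‖ := fun m =>
    formalDeriv_lipschitz_on_ball A B f R m
  choose Lf hLf0 hLf using hLm
  set L : ℝ := ∑ m ∈ Finset.range (j + 2), Lf m with hLdef
  have hL0 : 0 ≤ L := Finset.sum_nonneg fun m _ => hLf0 m
  have hLbig : ∀ m, m ≤ j + 1 → ∀ a, ‖a‖ ≤ R → ∀ b, ‖b‖ ≤ R →
      ‖D m a - D m b‖ ≤ L * ‖a - b‖ := by
    intro m hm a ha b hb
    refine le_trans (hLf m a ha b hb) (mul_le_mul_of_nonneg_right ?_ (norm_nonneg _))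
    exact Finset.single_le_sum (fun i _ => hLf0 i) (Finset.mem_range.mpr (by omega))
  -- Grönwall constant
  obtain ⟨K, hK0, hKgr⟩ := gronwall_traj A B f R (le_of_lt hR) Ψ hΨ0 hΨR hΨode
  set T : ℝ := (j : ℝ) with hTdef
  have hT0 : (0:ℝ) ≤ T := Nat.cast_nonneg j
  set eK : ℝ := Real.exp (K * T) with heKdef
  have heK1 : 1 ≤ eK := Real.one_le_exp (by positivity)
  have heK0 : 0 < eK := Real.exp_pos _
  -- Vandermonde inverse
  obtain ⟨Nm, hNm⟩ := vandermonde_recovery j (F := EuclideanSpace ℝ (Fin dO))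
  set CN : ℝ := 1 + ∑ p : Fin (j + 1) × Fin (j + 1), |Nm p.1 p.2| with hCNdef
  have hCN1 : 1 ≤ CN := by
    rw [hCNdef]
    have : 0 ≤ ∑ p : Fin (j + 1) × Fin (j + 1), |Nm p.1 p.2| :=
      Finset.sum_nonneg fun p _ => abs_nonneg _
    linarith
  have hCN0 : 0 < CN := lt_of_lt_of_le one_pos hCN1
  have hCNe : ∀ (m i : Fin (j + 1)), |Nm m i| ≤ CN := by
    intro m i
    have := Finset.single_le_sum
      (f := fun p : Fin (j + 1) × Fin (j + 1) => |Nm p.1 p.2|)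
      (fun p _ => abs_nonneg _) (Finset.mem_univ (m, i))
    rw [hCNdef]
    simpa using le_trans this (by linarith)
  -- the error constant
  set CE : ℝ := ‖H‖ * L * eK * ((j:ℝ) + 1) ^ (j + 1) + 1 with hCEdef
  have hCE1 : 1 ≤ CE := by
    rw [hCEdef]
    have : 0 ≤ ‖H‖ * L * eK * ((j:ℝ) + 1) ^ (j + 1) := by positivity
    linarith
  have hCE0 : 0 < CE := lt_of_lt_of_le one_pos hCE1
  set Cfac : ℝ := ((j + 1).factorial : ℝ) with hCfacdef
  have hCfac1 : 1 ≤ Cfac := by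
    rw [hCfacdef]
    exact_mod_cast Nat.one_le_iff_ne_zero.mpr (Nat.factorial_ne_zero _)
  have hCfac0 : 0 < Cfac := lt_of_lt_of_le one_pos hCfac1
  -- the threshold
  set Q : ℝ := 2 * ((j:ℝ) + 1) * Cfac * CN * ((j:ℝ) + 1) * CE with hQdef
  have hQ0 : 0 < Q := by positivity
  refine ⟨min 1 (c₂ / Q), lt_min one_pos (div_pos hc₂pos hQ0), ?_⟩
  intro h hh0 hhle k hjk
  have hh1 : h ≤ 1 := le_trans hhle (min_le_left _ _)
  have hhQ : Q * h ≤ c₂ := by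
    have := le_trans hhle (min_le_right _ _)
    rw [le_div_iff₀ hQ0] at this
    linarith
  -- the final constant
  refine ⟨c₂ * h ^ j / (2 * ((j:ℝ) + 1) * Cfac * CN * ((j:ℝ) + 1)), by positivity, ?_⟩
  intro v hv
  set w : ℝ := ‖v - u‖ with hwdef
  have hw0 : 0 ≤ w := norm_nonneg _
  -- observations and coefficients
  set zf : Fin (j + 1) → EuclideanSpace ℝ (Fin dO) := fun m =>
    H (D (m:ℕ) u) - H (D (m:ℕ) v) with hzfdef
  set y : Fin (j + 1) → EuclideanSpace ℝ (Fin dO) := fun m =>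
    (h ^ (m:ℕ) / ((m:ℕ).factorial : ℝ)) • zf m with hydef
  set obs : Fin (j + 1) → EuclideanSpace ℝ (Fin dO) := fun i =>
    H (Ψ (((i:ℕ):ℝ) * h) u) - H (Ψ (((i:ℕ):ℝ) * h) v) with hobsdef
  set Sobs : ℝ := ∑ i : Fin (j + 1), ‖obs i‖ with hSobsdef
  have hSobs0 : 0 ≤ Sobs := Finset.sum_nonneg fun i _ => norm_nonneg _
  -- Grönwall bound
  set Cg : ℝ := w * eK with hCgdef
  have hCg : ∀ t ∈ Icc (0:ℝ) T, ‖Ψ t u - Ψ t v‖ ≤ Cg := by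
    intro t ht
    calc ‖Ψ t u - Ψ t v‖ ≤ ‖u - v‖ * Real.exp (K * T) := hKgr v u hv hu' T hT0 t ht
      _ = Cg := by rw [hCgdef, hwdef, heKdef, norm_sub_rev]
  -- the error bound for each observation time
  have herr : ∀ i : Fin (j + 1),
      ‖(∑ m' : Fin (j + 1), (((i:ℕ):ℝ)) ^ (m':ℕ) • y m') - obs i‖
        ≤ CE * w * h ^ (j + 1) := by
    intro i
    set t : ℝ := ((i:ℕ):ℝ) * h with htdef
    have hij : ((i:ℕ):ℝ) ≤ (j:ℝ) := by exact_mod_cast Fin.is_le i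
    have hi0 : (0:ℝ) ≤ ((i:ℕ):ℝ) := Nat.cast_nonneg _
    have ht0 : 0 ≤ t := by positivity
    have htT : t ≤ T := by
      rw [htdef, hTdef]
      nlinarith
    have htay := taylor_diff_bound A B f R Ψ v u hv hu' hΨ0 hΨR hΨode
      (j + 1) L hL0 hLbig T Cg hCg j 0 (by omega) t ⟨ht0, htT⟩
    have happ : ‖H ((D 0 (Ψ t u) - D 0 (Ψ t v)) -
        ∑ m ∈ Finset.range (j + 1), (t ^ m / (m.factorial : ℝ)) •
          (D (0 + m) u - D (0 + m) v))‖
        ≤ ‖H‖ * (L * Cg * t ^ (j + 1) / ((j + 1).factorial : ℝ)) :=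
      le_trans (H.le_opNorm _) (mul_le_mul_of_nonneg_left htay (norm_nonneg H))
    have hD0 : ∀ x : EuclideanSpace ℝ (Fin d), D 0 x = x := fun x =>
      formalDeriv_zero _ _ _ _
    have hinside : H ((D 0 (Ψ t u) - D 0 (Ψ t v)) -
        ∑ m ∈ Finset.range (j + 1), (t ^ m / (m.factorial : ℝ)) •
          (D (0 + m) u - D (0 + m) v))
        = obs i - ∑ m' : Fin (j + 1), (((i:ℕ):ℝ)) ^ (m':ℕ) • y m' := by
      rw [map_sub, map_sub, hD0, hD0]
      congr 1
      rw [map_sum]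
      rw [← Fin.sum_univ_eq_sum_range (fun m => H ((t ^ m / (m.factorial : ℝ)) •
        (D (0 + m) u - D (0 + m) v))) (j + 1)]
      refine Finset.sum_congr rfl fun m _ => ?_
      rw [map_smul, map_sub]
      rw [hydef]
      rw [smul_smul]
      congr 1
      · rw [htdef, mul_pow]
        ring
      · rw [hzfdef]
        simp [Nat.zero_add]
    rw [hinside] at happ
    rw [norm_sub_rev]
    refine le_trans happ ?_
    -- now bound the right-hand side
    have hpow : t ^ (j + 1) ≤ ((j:ℝ) + 1) ^ (j + 1) * h ^ (j + 1) := by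
      rw [htdef, mul_pow]
      refine mul_le_mul_of_nonneg_right ?_ (pow_nonneg (le_of_lt hh0) _)
      exact pow_le_pow_left₀ hi0 (by linarith) _
    have hCg0 : 0 ≤ Cg := by rw [hCgdef]; positivity
    have ht0' : 0 ≤ t ^ (j + 1) := pow_nonneg ht0 _
    calc ‖H‖ * (L * Cg * t ^ (j + 1) / ((j + 1).factorial : ℝ))
        ≤ ‖H‖ * (L * Cg * t ^ (j + 1)) := by
          refine mul_le_mul_of_nonneg_left ?_ (norm_nonneg H)
          refine div_le_self (by positivity) ?_
          rw [← hCfacdef]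
          exact hCfac1
      _ = (‖H‖ * L * eK) * (w * t ^ (j + 1)) := by rw [hCgdef]; ring
      _ ≤ (‖H‖ * L * eK) * (w * (((j:ℝ) + 1) ^ (j + 1) * h ^ (j + 1))) := by
          refine mul_le_mul_of_nonneg_left ?_ (by positivity)
          exact mul_le_mul_of_nonneg_left hpow hw0
      _ = (‖H‖ * L * eK * ((j:ℝ) + 1) ^ (j + 1)) * (w * h ^ (j + 1)) := by ring
      _ ≤ CE * (w * h ^ (j + 1)) := by
          refine mul_le_mul_of_nonneg_right ?_ (by positivity)
          rw [hCEdef]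
          linarith
      _ = CE * w * h ^ (j + 1) := by ring
  -- Vandermonde recovery bound
  have hobsA : ∀ i : Fin (j + 1),
      ‖∑ m' : Fin (j + 1), (((i:ℕ):ℝ)) ^ (m':ℕ) • y m'‖
        ≤ ‖obs i‖ + CE * w * h ^ (j + 1) := by
    intro i
    calc ‖∑ m' : Fin (j + 1), (((i:ℕ):ℝ)) ^ (m':ℕ) • y m'‖
        = ‖obs i + ((∑ m' : Fin (j + 1), (((i:ℕ):ℝ)) ^ (m':ℕ) • y m') - obs i)‖ := by
          congr 1
          abel
      _ ≤ ‖obs i‖ + ‖(∑ m' : Fin (j + 1), (((i:ℕ):ℝ)) ^ (m':ℕ) • y m') - obs i‖ :=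
          norm_add_le _ _
      _ ≤ ‖obs i‖ + CE * w * h ^ (j + 1) := by
          have := herr i
          linarith
  have hym : ∀ m : Fin (j + 1),
      ‖y m‖ ≤ CN * (Sobs + ((j:ℝ) + 1) * (CE * w * h ^ (j + 1))) := by
    intro m
    rw [hNm y m]
    calc ‖∑ i : Fin (j + 1), Nm m i •
          (∑ m' : Fin (j + 1), (((i:ℕ):ℝ)) ^ (m':ℕ) • y m')‖
        ≤ ∑ i : Fin (j + 1), ‖Nm m i •
          (∑ m' : Fin (j + 1), (((i:ℕ):ℝ)) ^ (m':ℕ) • y m')‖ := norm_sum_le _ _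
      _ ≤ ∑ i : Fin (j + 1), CN * (‖obs i‖ + CE * w * h ^ (j + 1)) := by
          refine Finset.sum_le_sum fun i _ => ?_
          rw [norm_smul, Real.norm_eq_abs]
          exact mul_le_mul (hCNe m i) (hobsA i) (norm_nonneg _) (le_of_lt hCN0)
      _ = CN * (Sobs + ((j:ℝ) + 1) * (CE * w * h ^ (j + 1))) := by
          rw [← Finset.mul_sum]
          congr 1
          rw [Finset.sum_add_distrib, Finset.sum_const, Finset.card_univ,
            Fintype.card_fin, nsmul_eq_mul, hSobsdef]
          push_cast
          ring
  -- from coefficients to derivative observations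
  have hzm : ∀ m : Fin (j + 1), ‖zf m‖ * h ^ j ≤ Cfac * ‖y m‖ := by
    intro m
    have hmle : (m:ℕ) ≤ j := Fin.is_le m
    have hynorm : ‖y m‖ = (h ^ (m:ℕ) / (((m:ℕ)).factorial : ℝ)) * ‖zf m‖ := by
      rw [hydef]
      rw [norm_smul, Real.norm_eq_abs, abs_of_pos (by positivity)]
    rw [hynorm]
    have hfacle : (((m:ℕ)).factorial : ℝ) ≤ Cfac := by
      rw [hCfacdef]
      exact_mod_cast Nat.factorial_le (by omega)
    have hpowle : h ^ j ≤ h ^ (m:ℕ) :=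
      pow_le_pow_of_le_one (le_of_lt hh0) hh1 hmle
    have hfac0 : (0:ℝ) < (((m:ℕ)).factorial : ℝ) := by positivity
    have hcoef : h ^ j ≤ Cfac * h ^ (m:ℕ) / (((m:ℕ)).factorial : ℝ) := by
      rw [le_div_iff₀ hfac0]
      calc h ^ j * (((m:ℕ)).factorial : ℝ)
          ≤ h ^ (m:ℕ) * Cfac :=
            mul_le_mul hpowle hfacle (le_of_lt hfac0) (by positivity)
        _ = Cfac * h ^ (m:ℕ) := mul_comm _ _
    calc ‖zf m‖ * h ^ j
        ≤ ‖zf m‖ * (Cfac * h ^ (m:ℕ) / (((m:ℕ)).factorial : ℝ)) :=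
          mul_le_mul_of_nonneg_left hcoef (norm_nonneg _)
      _ = Cfac * (h ^ (m:ℕ) / (((m:ℕ)).factorial : ℝ) * ‖zf m‖) := by ring
  -- the key lower bound, in terms of zf
  have hkey : c₂ * w ≤ ∑ m : Fin (j + 1), ‖zf m‖ := by
    have := hc₂ v hv
    rw [hwdef]
    refine le_trans this (le_of_eq ?_)
    rw [← Fin.sum_univ_eq_sum_range (fun m => ‖H (D m v) - H (D m u)‖) (j + 1)]
    refine Finset.sum_congr rfl fun m _ => ?_
    rw [hzfdef, norm_sub_rev]
  -- assemble
  have hstep : c₂ * w * h ^ j ≤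
      ((j:ℝ) + 1) * (Cfac * (CN * (Sobs + ((j:ℝ) + 1) * (CE * w * h ^ (j + 1))))) := by
    calc c₂ * w * h ^ j ≤ (∑ m : Fin (j + 1), ‖zf m‖) * h ^ j :=
          mul_le_mul_of_nonneg_right hkey (by positivity)
      _ = ∑ m : Fin (j + 1), ‖zf m‖ * h ^ j := by rw [Finset.sum_mul]
      _ ≤ ∑ m : Fin (j + 1), Cfac * ‖y m‖ := Finset.sum_le_sum fun m _ => hzm m
      _ ≤ ∑ m : Fin (j + 1), Cfac * (CN * (Sobs + ((j:ℝ) + 1) * (CE * w * h ^ (j + 1)))) := by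
          refine Finset.sum_le_sum fun m _ => ?_
          exact mul_le_mul_of_nonneg_left (hym m) (le_of_lt hCfac0)
      _ = ((j:ℝ) + 1) * (Cfac * (CN * (Sobs + ((j:ℝ) + 1) * (CE * w * h ^ (j + 1))))) := by
          rw [Finset.sum_const, Finset.card_univ, Fintype.card_fin, nsmul_eq_mul]
          push_cast
          ring
  -- absorb the error term
  have herrterm : ((j:ℝ) + 1) * Cfac * CN * (((j:ℝ) + 1) * (CE * w * h ^ (j + 1)))
      ≤ (c₂ / 2) * (w * h ^ j) := by
    have hQh : ((j:ℝ) + 1) * Cfac * CN * ((j:ℝ) + 1) * CE * h ≤ c₂ / 2 := by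
      rw [hQdef] at hhQ
      ring_nf at hhQ ⊢
      linarith
    have hwh : 0 ≤ w * h ^ j := by positivity
    calc ((j:ℝ) + 1) * Cfac * CN * (((j:ℝ) + 1) * (CE * w * h ^ (j + 1)))
        = (((j:ℝ) + 1) * Cfac * CN * ((j:ℝ) + 1) * CE * h) * (w * h ^ j) := by
          rw [pow_succ]
          ring
      _ ≤ (c₂ / 2) * (w * h ^ j) := mul_le_mul_of_nonneg_right hQh hwh
  have hSobslow : (c₂ / 2) * (w * h ^ j) ≤ ((j:ℝ) + 1) * Cfac * CN * Sobs := by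
    ring_nf at hstep herrterm ⊢
    linarith
  -- extract a single large observation
  have hexists : ∃ i : Fin (j + 1), Sobs / ((j:ℝ) + 1) ≤ ‖obs i‖ := by
    by_contra hcon
    push_neg at hcon
    have : Sobs < ((j:ℝ) + 1) * (Sobs / ((j:ℝ) + 1)) := by
      calc Sobs = ∑ i : Fin (j + 1), ‖obs i‖ := hSobsdef
        _ < ∑ _i : Fin (j + 1), Sobs / ((j:ℝ) + 1) := by
            refine Finset.sum_lt_sum_of_nonempty ?_ fun i _ => hcon i
            exact Finset.univ_nonempty
        _ = ((j:ℝ) + 1) * (Sobs / ((j:ℝ) + 1)) := by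
            rw [Finset.sum_const, Finset.card_univ, Fintype.card_fin, nsmul_eq_mul]
            push_cast
            ring
    rw [mul_div_cancel₀] at this
    · exact lt_irrefl _ this
    · positivity
  obtain ⟨i, hi⟩ := hexists
  have hik : (i:ℕ) ≤ k := by
    have := Fin.is_le i
    omega
  refine ⟨(i:ℕ), hik, ?_⟩
  have h2 : Sobs ≤ ((j:ℝ) + 1) * ‖obs i‖ := by
    rw [div_le_iff₀ (by positivity)] at hi
    linarith
  have h3 : ((j:ℝ) + 1) * Cfac * CN * Sobs
      ≤ ((j:ℝ) + 1) * Cfac * CN * (((j:ℝ) + 1) * ‖obs i‖) :=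
    mul_le_mul_of_nonneg_left h2 (by positivity)
  have hfinal : c₂ * h ^ j / (2 * ((j:ℝ) + 1) * Cfac * CN * ((j:ℝ) + 1)) * w
      ≤ ‖obs i‖ := by
    rw [div_mul_eq_mul_div, div_le_iff₀ (by positivity)]
    ring_nf at hSobslow h3 ⊢
    linarith
  exact hfinal
end
end

section
/- Consider the transformed Lorenz 63' system in ℝ³ with coefficients A given by the matrix with rows (a, −a, 0), (a, 1, 0), (0, 0, b), bilinear form B(u,ũ) = (0, (u₁ũ₃ + u₃ũ₁)/2, −(u₁ũ₂ + u₂ũ₁)/2), and constant vector f = (0, 0, c) for some real c, where a ≠ 0 and b are real. Then for every u ∈ ℝ³ with u₁ ≠ 0: (i) any v ∈ ℝ³ satisfying (D⁰v)₁ = (D⁰u)₁, (D¹v)₁ = (D¹u)₁ and (D²v)₁ = (D²u)₁ equals u; and (ii) the gradients at u of the three polynomial functions v ↦ (D⁰v)₁, v ↦ (D¹v)₁, v ↦ (D²v)₁ are linearly independent, i.e. they span ℝ³. -/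
noncomputable section

/-- The linear part of the transformed Lorenz 63' system, with rows
`(a, -a, 0)`, `(a, 1, 0)`, `(0, 0, b)`. -/
def lorenz63A (a b : ℝ) : EuclideanSpace ℝ (Fin 3) → EuclideanSpace ℝ (Fin 3) :=
  fun v => (WithLp.equiv 2 (Fin 3 → ℝ)).symm
    ![a * v 0 - a * v 1, a * v 0 + v 1, b * v 2]

/-- The bilinear part of the transformed Lorenz 63' system:
`B(u,ũ) = (0, (u₁ũ₃ + u₃ũ₁)/2, -(u₁ũ₂ + u₂ũ₁)/2)`. -/
def lorenz63B : EuclideanSpace ℝ (Fin 3) → EuclideanSpace ℝ (Fin 3) →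
    EuclideanSpace ℝ (Fin 3) :=
  fun u w => (WithLp.equiv 2 (Fin 3 → ℝ)).symm
    ![0, (u 0 * w 2 + u 2 * w 0) / 2, -((u 0 * w 1 + u 1 * w 0) / 2)]

/-- The constant forcing `(0, 0, c)` of the transformed Lorenz 63' system. -/
def lorenz63f (c : ℝ) : EuclideanSpace ℝ (Fin 3) :=
  (WithLp.equiv 2 (Fin 3 → ℝ)).symm ![0, 0, c]

lemma euclid_sum_apply {ι : Type*} (s : Finset ι) (g : ι → EuclideanSpace ℝ (Fin 3))
    (i : Fin 3) : (∑ x ∈ s, g x) i = ∑ x ∈ s, g x i :=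
  map_sum (EuclideanSpace.proj i) _ _

lemma fd0 (a b c : ℝ) (v : EuclideanSpace ℝ (Fin 3)) :
    formalDeriv (lorenz63A a b) lorenz63B (lorenz63f c) 0 v 0 = v 0 := by simp [formalDeriv]

lemma fd1 (a b c : ℝ) (v : EuclideanSpace ℝ (Fin 3)) :
    formalDeriv (lorenz63A a b) lorenz63B (lorenz63f c) 1 v 0 = a * v 1 - a * v 0 := by
  simp [formalDeriv, lorenz63A, lorenz63B, lorenz63f]

lemma fd2 (a b c : ℝ) (v : EuclideanSpace ℝ (Fin 3)) :
    formalDeriv (lorenz63A a b) lorenz63B (lorenz63f c) 2 v 0 =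
      -(a^2+a) * v 1 - a * (v 0 * v 2) := by
  simp [formalDeriv, euclid_sum_apply, lorenz63A, lorenz63B, lorenz63f]
  ring

lemma grad0 (u : EuclideanSpace ℝ (Fin 3)) :
    HasGradientAt (fun v : EuclideanSpace ℝ (Fin 3) => v 0)
      ((WithLp.equiv 2 (Fin 3 → ℝ)).symm ![1, 0, 0]) u := by
  rw [hasGradientAt_iff_hasFDerivAt]
  have hL : HasFDerivAt (fun v : EuclideanSpace ℝ (Fin 3) => v 0)
      (EuclideanSpace.proj (0 : Fin 3) : EuclideanSpace ℝ (Fin 3) →L[ℝ] ℝ) u := (EuclideanSpace.proj (0 : Fin 3) : EuclideanSpace ℝ (Fin 3) →L[ℝ] ℝ).hasFDerivAt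
  refine hL.congr_fderiv ?_
  ext y
  simp [InnerProductSpace.toDual_apply_apply, PiLp.inner_apply, Fin.sum_univ_three]

lemma grad1 (a : ℝ) (u : EuclideanSpace ℝ (Fin 3)) :
    HasGradientAt (fun v : EuclideanSpace ℝ (Fin 3) => a * v 1 - a * v 0)
      ((WithLp.equiv 2 (Fin 3 → ℝ)).symm ![-a, a, 0]) u := by
  rw [hasGradientAt_iff_hasFDerivAt]
  have h0 : HasFDerivAt (fun v : EuclideanSpace ℝ (Fin 3) => v 0)
      (EuclideanSpace.proj (0 : Fin 3) : EuclideanSpace ℝ (Fin 3) →L[ℝ] ℝ) u := (EuclideanSpace.proj (0 : Fin 3) : EuclideanSpace ℝ (Fin 3) →L[ℝ] ℝ).hasFDerivAt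
  have h1 : HasFDerivAt (fun v : EuclideanSpace ℝ (Fin 3) => v 1)
      (EuclideanSpace.proj (1 : Fin 3) : EuclideanSpace ℝ (Fin 3) →L[ℝ] ℝ) u := (EuclideanSpace.proj (1 : Fin 3) : EuclideanSpace ℝ (Fin 3) →L[ℝ] ℝ).hasFDerivAt
  have hL := (h1.const_mul a).sub (h0.const_mul a)
  refine hL.congr_fderiv ?_
  ext y
  simp [InnerProductSpace.toDual_apply_apply, PiLp.inner_apply, Fin.sum_univ_three]
  ring

lemma grad2 (a : ℝ) (u : EuclideanSpace ℝ (Fin 3)) :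
    HasGradientAt (fun v : EuclideanSpace ℝ (Fin 3) => -(a^2+a) * v 1 - a * (v 0 * v 2))
      ((WithLp.equiv 2 (Fin 3 → ℝ)).symm ![-(a * u 2), -(a^2+a), -(a * u 0)]) u := by
  rw [hasGradientAt_iff_hasFDerivAt]
  have h0 : HasFDerivAt (fun v : EuclideanSpace ℝ (Fin 3) => v 0)
      (EuclideanSpace.proj (0 : Fin 3) : EuclideanSpace ℝ (Fin 3) →L[ℝ] ℝ) u := (EuclideanSpace.proj (0 : Fin 3) : EuclideanSpace ℝ (Fin 3) →L[ℝ] ℝ).hasFDerivAt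
  have h1 : HasFDerivAt (fun v : EuclideanSpace ℝ (Fin 3) => v 1)
      (EuclideanSpace.proj (1 : Fin 3) : EuclideanSpace ℝ (Fin 3) →L[ℝ] ℝ) u := (EuclideanSpace.proj (1 : Fin 3) : EuclideanSpace ℝ (Fin 3) →L[ℝ] ℝ).hasFDerivAt
  have h2 : HasFDerivAt (fun v : EuclideanSpace ℝ (Fin 3) => v 2)
      (EuclideanSpace.proj (2 : Fin 3) : EuclideanSpace ℝ (Fin 3) →L[ℝ] ℝ) u := (EuclideanSpace.proj (2 : Fin 3) : EuclideanSpace ℝ (Fin 3) →L[ℝ] ℝ).hasFDerivAt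
  have hL := (h1.const_mul (-(a^2+a))).sub ((h0.mul h2).const_mul a)
  refine hL.congr_fderiv ?_
  ext y
  simp [InnerProductSpace.toDual_apply_apply, PiLp.inner_apply, Fin.sum_univ_three]
  ring

/-- for the transformed Lorenz 63' system, observing the first
coordinate of `D⁰v`, `D¹v`, `D²v` determines the initial condition whenever its
first coordinate is nonzero, and the gradients of these three observed
quantities span `ℝ³`. -/
theorem lorenz63_derivative_conditions (a b c : ℝ) (ha : a ≠ 0)
    (u : EuclideanSpace ℝ (Fin 3)) (hu : u 0 ≠ 0) :
    (∀ v : EuclideanSpace ℝ (Fin 3),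
      (∀ i ≤ 2, formalDeriv (lorenz63A a b) lorenz63B (lorenz63f c) i v 0 =
        formalDeriv (lorenz63A a b) lorenz63B (lorenz63f c) i u 0) → v = u) ∧
    Submodule.span ℝ
      {g : EuclideanSpace ℝ (Fin 3) | ∃ i ≤ 2,
        g = gradient (fun v => formalDeriv (lorenz63A a b) lorenz63B (lorenz63f c) i v 0) u}
      = ⊤ := by
  constructor
  · intro v hv
    have h0 := hv 0 (by norm_num); rw [fd0, fd0] at h0
    have h1 := hv 1 (by norm_num); rw [fd1, fd1] at h1
    have h2 := hv 2 (by norm_num); rw [fd2, fd2] at h2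
    have e1 : v 1 = u 1 := by
      rw [h0] at h1
      have : a * v 1 = a * u 1 := by linarith
      exact mul_left_cancel₀ ha this
    have e2 : v 2 = u 2 := by
      rw [h0, e1] at h2
      have : a * (u 0 * v 2) = a * (u 0 * u 2) := by linarith
      have := mul_left_cancel₀ ha this
      exact mul_left_cancel₀ hu this
    ext i
    fin_cases i
    · exact h0
    · exact e1
    · exact e2
  · -- span part
    have hg0 : gradient (fun v => formalDeriv (lorenz63A a b) lorenz63B (lorenz63f c) 0 v 0) u
        = (WithLp.equiv 2 (Fin 3 → ℝ)).symm ![1, 0, 0] := by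
      have : (fun v : EuclideanSpace ℝ (Fin 3) =>
          formalDeriv (lorenz63A a b) lorenz63B (lorenz63f c) 0 v 0)
          = fun v => v 0 := funext fun v => fd0 a b c v
      rw [this]; exact (grad0 u).gradient
    have hg1 : gradient (fun v => formalDeriv (lorenz63A a b) lorenz63B (lorenz63f c) 1 v 0) u
        = (WithLp.equiv 2 (Fin 3 → ℝ)).symm ![-a, a, 0] := by
      have : (fun v : EuclideanSpace ℝ (Fin 3) =>
          formalDeriv (lorenz63A a b) lorenz63B (lorenz63f c) 1 v 0)
          = fun v => a * v 1 - a * v 0 := funext fun v => fd1 a b c v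
      rw [this]; exact (grad1 a u).gradient
    have hg2 : gradient (fun v => formalDeriv (lorenz63A a b) lorenz63B (lorenz63f c) 2 v 0) u
        = (WithLp.equiv 2 (Fin 3 → ℝ)).symm ![-(a * u 2), -(a^2+a), -(a * u 0)] := by
      have : (fun v : EuclideanSpace ℝ (Fin 3) =>
          formalDeriv (lorenz63A a b) lorenz63B (lorenz63f c) 2 v 0)
          = fun v => -(a^2+a) * v 1 - a * (v 0 * v 2) := funext fun v => fd2 a b c v
      rw [this]; exact (grad2 a u).gradient
    set S : Set (EuclideanSpace ℝ (Fin 3)) :=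
      {g : EuclideanSpace ℝ (Fin 3) | ∃ i ≤ 2,
        g = gradient (fun v => formalDeriv (lorenz63A a b) lorenz63B (lorenz63f c) i v 0) u}
    have m0 : (WithLp.equiv 2 (Fin 3 → ℝ)).symm ![1, 0, 0] ∈ Submodule.span ℝ S :=
      Submodule.subset_span ⟨0, by norm_num, hg0.symm⟩
    have m1 : (WithLp.equiv 2 (Fin 3 → ℝ)).symm ![-a, a, 0] ∈ Submodule.span ℝ S :=
      Submodule.subset_span ⟨1, by norm_num, hg1.symm⟩
    have m2 : (WithLp.equiv 2 (Fin 3 → ℝ)).symm ![-(a * u 2), -(a^2+a), -(a * u 0)]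
        ∈ Submodule.span ℝ S :=
      Submodule.subset_span ⟨2, by norm_num, hg2.symm⟩
    -- basis vectors
    have e0m : (WithLp.equiv 2 (Fin 3 → ℝ)).symm ![(1:ℝ), 0, 0] ∈ Submodule.span ℝ S := m0
    have e1m : (WithLp.equiv 2 (Fin 3 → ℝ)).symm ![(0:ℝ), 1, 0] ∈ Submodule.span ℝ S := by
      have heq : (WithLp.equiv 2 (Fin 3 → ℝ)).symm ![-a, a, 0]
            + a • (WithLp.equiv 2 (Fin 3 → ℝ)).symm ![(1:ℝ), 0, 0]
          = a • (WithLp.equiv 2 (Fin 3 → ℝ)).symm ![(0:ℝ), 1, 0] := by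
        ext i
        fin_cases i <;> simp [PiLp.add_apply, PiLp.smul_apply]
      have h2' : (WithLp.equiv 2 (Fin 3 → ℝ)).symm ![(0:ℝ), 1, 0]
          = a⁻¹ • ((WithLp.equiv 2 (Fin 3 → ℝ)).symm ![-a, a, 0]
            + a • (WithLp.equiv 2 (Fin 3 → ℝ)).symm ![(1:ℝ), 0, 0]) := by
        rw [heq, smul_smul, inv_mul_cancel₀ ha, one_smul]
      rw [h2']
      exact Submodule.smul_mem _ _ (Submodule.add_mem _ m1 (Submodule.smul_mem _ _ e0m))
    have e2m : (WithLp.equiv 2 (Fin 3 → ℝ)).symm ![(0:ℝ), 0, 1] ∈ Submodule.span ℝ S := by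
      have hau : a * u 0 ≠ 0 := mul_ne_zero ha hu
      have hne : -(a * u 0) ≠ 0 := neg_ne_zero.mpr hau
      have heq : (WithLp.equiv 2 (Fin 3 → ℝ)).symm ![-(a * u 2), -(a^2+a), -(a * u 0)]
            + (a * u 2) • (WithLp.equiv 2 (Fin 3 → ℝ)).symm ![(1:ℝ), 0, 0]
            + (a^2+a) • (WithLp.equiv 2 (Fin 3 → ℝ)).symm ![(0:ℝ), 1, 0]
          = (-(a * u 0)) • (WithLp.equiv 2 (Fin 3 → ℝ)).symm ![(0:ℝ), 0, 1] := by
        ext i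
        fin_cases i <;> simp [PiLp.add_apply, PiLp.smul_apply] <;> try ring
      have h2' : (WithLp.equiv 2 (Fin 3 → ℝ)).symm ![(0:ℝ), 0, 1]
          = (-(a * u 0))⁻¹ • ((WithLp.equiv 2 (Fin 3 → ℝ)).symm ![-(a * u 2), -(a^2+a), -(a * u 0)]
            + (a * u 2) • (WithLp.equiv 2 (Fin 3 → ℝ)).symm ![(1:ℝ), 0, 0]
            + (a^2+a) • (WithLp.equiv 2 (Fin 3 → ℝ)).symm ![(0:ℝ), 1, 0]) := by
        rw [heq, smul_smul, inv_mul_cancel₀ hne, one_smul]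
      rw [h2']
      exact Submodule.smul_mem _ _
        (Submodule.add_mem _ (Submodule.add_mem _ m2 (Submodule.smul_mem _ _ e0m))
          (Submodule.smul_mem _ _ e1m))
    rw [Submodule.eq_top_iff']
    intro x
    have hx : x = x 0 • (WithLp.equiv 2 (Fin 3 → ℝ)).symm ![(1:ℝ), 0, 0]
        + x 1 • (WithLp.equiv 2 (Fin 3 → ℝ)).symm ![(0:ℝ), 1, 0]
        + x 2 • (WithLp.equiv 2 (Fin 3 → ℝ)).symm ![(0:ℝ), 0, 1] := by
      ext i
      fin_cases i <;> simp [PiLp.add_apply, PiLp.smul_apply]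
    rw [hx]
    exact Submodule.add_mem _
      (Submodule.add_mem _ (Submodule.smul_mem _ _ e0m) (Submodule.smul_mem _ _ e1m))
      (Submodule.smul_mem _ _ e2m)
end
end
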